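/- Let X̂ be a finite set of points in ℝⁿ, z ∈ ℝⁿ a point nondominated with respect to every y ∈ X̂ (for each y ∈ X̂, ¬(F(y) ⪇ F(z))), and suppose θᴵ(z) < 0 for some nonempty I ⊆ {1,...,m}. Then for δ ∈ (0,1), α₀ > 0, there exists h ∈ ℕ such that for every y ∈ X̂ there exists an index j ∈ {1,...,m} with fⱼ(z + α₀δʰ vᴵ(z)) < fⱼ(y). -/

import Mathlib

open RealInnerProductSpace

private theorem aux_decr (φ : ℝ → ℝ) (c : ℝ) (h : HasDerivAt φ c 0) (hc : c < 0) :
    ∀ᶠ t in nhdsWithin 0 (Set.Ioi 0), φ t < φ 0 := by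
  have hs := hasDerivAt_iff_tendsto_slope.mp h
  have h1 : ∀ᶠ t in nhdsWithin 0 {(0:ℝ)}ᶜ, slope φ 0 t < 0 :=
    hs.eventually_lt_const hc
  have h2 : ∀ᶠ t in nhdsWithin 0 (Set.Ioi 0), slope φ 0 t < 0 :=
    h1.filter_mono (nhdsWithin_mono _ (fun t ht => ne_of_gt ht))
  filter_upwards [h2, self_mem_nhdsWithin] with t ht (htpos : (0:ℝ) < t)
  have hdiv : (φ t - φ 0) / t < 0 := by simpa [slope_def_field, div_eq_inv_mul] using ht
  have := mul_neg_of_neg_of_pos hdiv htpos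
  rw [div_mul_cancel₀ _ (ne_of_gt htpos)] at this
  linarith

theorem ifsd_partial_line_search_well_defined
    {n m : ℕ}
    (f : Fin m → EuclideanSpace ℝ (Fin n) → ℝ)
    (hf : ∀ j, ContDiff ℝ 1 (f j))
    (Xhat : Finset (EuclideanSpace ℝ (Fin n)))
    (z : EuclideanSpace ℝ (Fin n))
    (hnondom : ∀ y ∈ Xhat,
      ¬ ((∀ j, f j y ≤ f j z) ∧ (fun j => f j y) ≠ (fun j => f j z)))
    (g : Fin m → EuclideanSpace ℝ (Fin n))
    (hg : ∀ j, HasGradientAt (f j) (g j) z)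
    (I : Finset (Fin m)) (hI : I.Nonempty)
    (v : EuclideanSpace ℝ (Fin n)) (θ : ℝ)
    (hθ : θ = I.sup' hI (fun j => ⟪g j, v⟫) + (1 / 2) * ‖v‖ ^ 2)
    (hmin : ∀ d : EuclideanSpace ℝ (Fin n),
      θ ≤ I.sup' hI (fun j => ⟪g j, d⟫) + (1 / 2) * ‖d‖ ^ 2)
    (hneg : θ < 0)
    (δ α₀ : ℝ) (hδ : δ ∈ Set.Ioo (0 : ℝ) 1) (hα₀ : 0 < α₀) :
    ∃ h : ℕ, ∀ y ∈ Xhat, ∃ j : Fin m,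
      f j (z + (α₀ * δ ^ h) • v) < f j y := by
  -- curve t ↦ z + t • v
  have hcurve : HasDerivAt (fun t : ℝ => z + t • v) v 0 := by
    simpa using (((hasDerivAt_id (0:ℝ)).smul_const v).const_add z)
  have hderiv : ∀ j, HasDerivAt (fun t : ℝ => f j (z + t • v)) ⟪g j, v⟫ 0 := by
    intro j
    have hF : HasFDerivAt (f j)
        ((InnerProductSpace.toDual ℝ (EuclideanSpace ℝ (Fin n))) (g j)) (z + (0:ℝ) • v) := by
      simpa using (hg j).hasFDerivAt
    have := hF.comp_hasDerivAt 0 hcurve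
    simp [InnerProductSpace.toDual_apply_apply] at this
    exact this
  -- each inner product over I is negative
  have hIneg : ∀ j ∈ I, ⟪g j, v⟫ < 0 := by
    intro j hj
    have h1 : ⟪g j, v⟫ ≤ I.sup' hI (fun j => ⟪g j, v⟫) := Finset.le_sup' (fun j => ⟪g j, v⟫) hj
    nlinarith [sq_nonneg ‖v‖]
  -- for each archive point, eventually some objective improves
  have key : ∀ y ∈ Xhat, ∀ᶠ t : ℝ in nhdsWithin 0 (Set.Ioi 0),
      ∃ j : Fin m, f j (z + t • v) < f j y := by
    intro y hy
    by_cases hcase : ∃ j, f j z < f j y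
    · obtain ⟨j, hj⟩ := hcase
      have hcont : ContinuousAt (fun t : ℝ => f j (z + t • v)) 0 :=
        (hderiv j).continuousAt
      have hev : ∀ᶠ t in nhds (0:ℝ), f j (z + t • v) < f j y := by
        have := hcont.tendsto
        simp only [zero_smul, add_zero] at this
        exact this.eventually_lt_const hj
      exact (hev.filter_mono nhdsWithin_le_nhds).mono fun t ht => ⟨j, ht⟩
    · push_neg at hcase
      have heq : (fun j => f j y) = (fun j => f j z) := by
        by_contra hne
        exact hnondom y hy ⟨hcase, hne⟩
      obtain ⟨j0, hj0⟩ := hI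
      have hdec := aux_decr _ _ (hderiv j0) (hIneg j0 hj0)
      refine hdec.mono fun t ht => ⟨j0, ?_⟩
      have h0 : f j0 y = f j0 z := congrFun heq j0
      simpa [h0] using ht
  have big : ∀ᶠ t : ℝ in nhdsWithin 0 (Set.Ioi 0),
      ∀ y ∈ Xhat, ∃ j : Fin m, f j (z + t • v) < f j y :=
    (Filter.eventually_all_finset Xhat).mpr key
  -- the sequence α₀ δ^h tends to 0 within (0, ∞)
  have ht0 : Filter.Tendsto (fun h : ℕ => α₀ * δ ^ h) Filter.atTop (nhds 0) := by
    simpa using (tendsto_pow_atTop_nhds_zero_of_lt_one hδ.1.le hδ.2).const_mul α₀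
  have htW : Filter.Tendsto (fun h : ℕ => α₀ * δ ^ h) Filter.atTop
      (nhdsWithin 0 (Set.Ioi 0)) := by
    refine tendsto_nhdsWithin_of_tendsto_nhds_of_eventually_within _ ht0 ?_
    exact Filter.Eventually.of_forall fun h => mul_pos hα₀ (pow_pos hδ.1 h)
  exact (htW.eventually big).exists
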